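/- arXiv:2406.07220 — 5 statements merged into one kernel-verified Lean document; each statement's English description precedes it below -/
import Mathlib

section
/- Let (Ω, 𝔽, ℙ) be a probability space, H a real Hilbert space, T > 0, τ ∈ (0, 1], and N ∈ ℕ with N τ ≤ T. Let u : {0, …, N} → H (the exact trajectory at the time points tⁿ = nτ), let Ψ : ℝ × H → H, and define the deterministic iterates û⁰ = u⁰, û^{n+1} = Ψ(tⁿ, ûⁿ). Assume: (i) there are constants C, q > 0 with ‖u^n − ûⁿ‖ ≤ C τ^q for all n ≤ N; (ii) there is a constant L_Ψ > 0 with ‖Ψ(t, v₁) − Ψ(t, v₂)‖ ≤ (1 + L_Ψ τ) ‖v₁ − v₂‖ for all t ∈ [0, T] and v₁, v₂ ∈ H. Let U⁰ = u⁰ and U^{n+1} = Ψ(tⁿ, Uⁿ) + ξⁿ, where each random variable ξⁿ : Ω → H is square-integrable, satisfies 𝔼‖ξⁿ‖² ≤ C_ξ τ^{2p+1} for constants C_ξ, p > 0, and satisfies 𝔼⟨Ψ(tⁿ, ûⁿ) − Ψ(tⁿ, Uⁿ), ξⁿ⟩ = 0 for each n, and assume each Uⁿ is square-integrable. Then there exists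 a constant C' > 0 depending only on T, C, L_Ψ, C_ξ (and not on τ or n) such that max_{0 ≤ n ≤ N} ( 𝔼‖uⁿ − Uⁿ‖² )^{1/2} ≤ C' τ^{min{p, q}}. -/
open MeasureTheory
open scoped ENNReal

private lemma int_norm_sq' {α : Type*} [MeasurableSpace α] {μ : Measure α}
    {E : Type*} [NormedAddCommGroup E] {f : α → E} (hf : MemLp f 2 μ) :
    Integrable (fun x => ‖f x‖ ^ 2) μ := by
  have h := hf.integrable_norm_rpow two_ne_zero ENNReal.ofNat_ne_top
  have h2 : (2 : ℝ≥0∞).toReal = (2 : ℝ) := by simp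
  rw [h2] at h
  convert h using 2 with x
  rw [← Real.rpow_natCast ‖f x‖ 2]
  norm_num

private lemma int_inner' {α : Type*} [MeasurableSpace α] {μ : Measure α}
    {E : Type*} [NormedAddCommGroup E] [InnerProductSpace ℝ E] {f g : α → E}
    (hf : MemLp f 2 μ) (hg : MemLp g 2 μ) :
    Integrable (fun x => (inner ℝ (f x) (g x) : ℝ)) μ := by
  refine Integrable.mono' ((int_norm_sq' hf).add (int_norm_sq' hg))
    (hf.aestronglyMeasurable.inner hg.aestronglyMeasurable)
    (Filter.Eventually.of_forall fun x => ?_)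
  have h1 : |(inner ℝ (f x) (g x) : ℝ)| ≤ ‖f x‖ * ‖g x‖ := abs_real_inner_le_norm _ _
  have h2 : ‖f x‖ * ‖g x‖ ≤ ‖f x‖ ^ 2 + ‖g x‖ ^ 2 := by
    nlinarith [sq_nonneg (‖f x‖ - ‖g x‖), norm_nonneg (f x), norm_nonneg (g x)]
  calc ‖(inner ℝ (f x) (g x) : ℝ)‖ = |(inner ℝ (f x) (g x) : ℝ)| := rfl
    _ ≤ ‖f x‖ ^ 2 + ‖g x‖ ^ 2 := h1.trans h2

private lemma sqrt_add_le' (a b : ℝ) (ha : 0 ≤ a) (hb : 0 ≤ b) :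
    Real.sqrt (a + b) ≤ Real.sqrt a + Real.sqrt b := by
  nlinarith [Real.sq_sqrt ha, Real.sq_sqrt hb, Real.sq_sqrt (add_nonneg ha hb),
    Real.sqrt_nonneg a, Real.sqrt_nonneg b, Real.sqrt_nonneg (a + b),
    mul_nonneg (Real.sqrt_nonneg a) (Real.sqrt_nonneg b)]

set_option maxHeartbeats 2000000 in
/-- Global mean square convergence of randomized time integrators. -/
theorem global_mean_square_convergence
    {Ω : Type*} [MeasurableSpace Ω] (ℙ : Measure Ω) [IsProbabilityMeasure ℙ]
    {H : Type*} [NormedAddCommGroup H] [InnerProductSpace ℝ H]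
    (T C Lψ Cξ p q : ℝ) (hT : 0 < T) (hC : 0 < C) (hLψ : 0 < Lψ) (hCξ : 0 < Cξ)
    (hp : 0 < p) (hq : 0 < q) :
    ∃ C' > 0, ∀ (τ : ℝ), 0 < τ → τ ≤ 1 → ∀ (N : ℕ), N * τ ≤ T →
      ∀ (u : ℕ → H) (Ψ : ℝ → H → H) (uDet : ℕ → H) (ξ : ℕ → Ω → H) (U : ℕ → Ω → H),
        uDet 0 = u 0 →
        (∀ n, uDet (n + 1) = Ψ ((n : ℝ) * τ) (uDet n)) →
        (∀ n ≤ N, ‖u n - uDet n‖ ≤ C * τ ^ q) →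
        (∀ t ∈ Set.Icc (0 : ℝ) T, ∀ v₁ v₂ : H,
          ‖Ψ t v₁ - Ψ t v₂‖ ≤ (1 + Lψ * τ) * ‖v₁ - v₂‖) →
        (∀ ω, U 0 ω = u 0) →
        (∀ n ω, U (n + 1) ω = Ψ ((n : ℝ) * τ) (U n ω) + ξ n ω) →
        (∀ n, MemLp (ξ n) 2 ℙ) →
        (∀ n, ∫ ω, ‖ξ n ω‖ ^ 2 ∂ℙ ≤ Cξ * τ ^ (2 * p + 1)) →
        (∀ n : ℕ, ∫ ω, (inner ℝ (Ψ ((n : ℝ) * τ) (uDet n) - Ψ ((n : ℝ) * τ) (U n ω)) (ξ n ω) : ℝ) ∂ℙ = 0) →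
        (∀ n, MemLp (U n) 2 ℙ) →
        ∀ n ≤ N, (∫ ω, ‖u n - U n ω‖ ^ 2 ∂ℙ) ^ ((1 : ℝ) / 2) ≤ C' * τ ^ min p q := by
  set K : ℝ := 2 * T * Cξ * Real.exp (2 * Lψ * T) with hKdef
  have hKpos : 0 < K := by positivity
  refine ⟨Real.sqrt 2 * C + Real.sqrt K, by positivity, ?_⟩
  intro τ hτ hτ1 N hNT u Ψ uDet ξ U hDet0 hDetRec hdet hLip hU0 hURec hξL2 hξbd horth hUL2 n hnN
  set A : ℝ := (1 + Lψ * τ) ^ 2 with hAdef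
  set B : ℝ := Cξ * τ ^ (2 * p + 1) with hBdef
  have hBpos : 0 < B := by positivity
  have hA1 : (1 : ℝ) ≤ A := by nlinarith [mul_pos hLψ hτ]
  -- Memℒp facts
  have hΨL2 : ∀ m : ℕ, MemLp (fun ω => Ψ ((m : ℝ) * τ) (U m ω)) 2 ℙ := by
    intro m
    have he : (fun ω => Ψ ((m : ℝ) * τ) (U m ω)) = fun ω => U (m + 1) ω - ξ m ω := by
      funext ω; rw [hURec m ω]; abel
    rw [he]; exact (hUL2 (m + 1)).sub (hξL2 m)
  have heL2 : ∀ m : ℕ, MemLp (fun ω => uDet m - U m ω) 2 ℙ :=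
    fun m => (memLp_const _).sub (hUL2 m)
  have hfL2 : ∀ m : ℕ, MemLp (fun ω => Ψ ((m : ℝ) * τ) (uDet m) - Ψ ((m : ℝ) * τ) (U m ω)) 2 ℙ :=
    fun m => (memLp_const _).sub (hΨL2 m)
  -- one-step recursion
  have hrec : ∀ m : ℕ, m < N →
      (∫ ω, ‖uDet (m + 1) - U (m + 1) ω‖ ^ 2 ∂ℙ)
        ≤ A * (∫ ω, ‖uDet m - U m ω‖ ^ 2 ∂ℙ) + B := by
    intro m hm
    have htm : ((m : ℝ) * τ) ∈ Set.Icc (0 : ℝ) T := by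
      constructor
      · positivity
      · calc (m : ℝ) * τ ≤ (N : ℝ) * τ := by
              apply mul_le_mul_of_nonneg_right _ hτ.le
              exact_mod_cast hm.le
          _ ≤ T := hNT
    have hIf := int_norm_sq' (hfL2 m)
    have hIξ := int_norm_sq' (hξL2 m)
    have hIe := int_norm_sq' (heL2 m)
    have hIinner := int_inner' (hfL2 m) (hξL2 m)
    have hpt : ∀ ω, ‖uDet (m + 1) - U (m + 1) ω‖ ^ 2
        = ‖Ψ ((m : ℝ) * τ) (uDet m) - Ψ ((m : ℝ) * τ) (U m ω)‖ ^ 2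
          - 2 * (inner ℝ (Ψ ((m : ℝ) * τ) (uDet m) - Ψ ((m : ℝ) * τ) (U m ω)) (ξ m ω) : ℝ)
          + ‖ξ m ω‖ ^ 2 := by
      intro ω
      rw [hDetRec m, hURec m ω]
      have he : Ψ ((m : ℝ) * τ) (uDet m) - (Ψ ((m : ℝ) * τ) (U m ω) + ξ m ω)
          = (Ψ ((m : ℝ) * τ) (uDet m) - Ψ ((m : ℝ) * τ) (U m ω)) - ξ m ω := by abel
      rw [he, norm_sub_sq_real]
    calc (∫ ω, ‖uDet (m + 1) - U (m + 1) ω‖ ^ 2 ∂ℙ)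
        = ∫ ω, (‖Ψ ((m : ℝ) * τ) (uDet m) - Ψ ((m : ℝ) * τ) (U m ω)‖ ^ 2
            - 2 * (inner ℝ (Ψ ((m : ℝ) * τ) (uDet m) - Ψ ((m : ℝ) * τ) (U m ω)) (ξ m ω) : ℝ)
            + ‖ξ m ω‖ ^ 2) ∂ℙ := integral_congr_ae (Filter.Eventually.of_forall hpt)
      _ = (∫ ω, ‖Ψ ((m : ℝ) * τ) (uDet m) - Ψ ((m : ℝ) * τ) (U m ω)‖ ^ 2 ∂ℙ)
            - 2 * (∫ ω, (inner ℝ (Ψ ((m : ℝ) * τ) (uDet m) - Ψ ((m : ℝ) * τ) (U m ω)) (ξ m ω) : ℝ) ∂ℙ)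
            + ∫ ω, ‖ξ m ω‖ ^ 2 ∂ℙ := by
          have hmul : Integrable (fun ω =>
              2 * (inner ℝ (Ψ ((m : ℝ) * τ) (uDet m) - Ψ ((m : ℝ) * τ) (U m ω)) (ξ m ω) : ℝ)) ℙ :=
            hIinner.const_mul 2
          have hsub : Integrable (fun ω =>
              ‖Ψ ((m : ℝ) * τ) (uDet m) - Ψ ((m : ℝ) * τ) (U m ω)‖ ^ 2
              - 2 * (inner ℝ (Ψ ((m : ℝ) * τ) (uDet m) - Ψ ((m : ℝ) * τ) (U m ω)) (ξ m ω) : ℝ)) ℙ :=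
            hIf.sub hmul
          rw [integral_add hsub hIξ, integral_sub hIf hmul, integral_const_mul]
      _ = (∫ ω, ‖Ψ ((m : ℝ) * τ) (uDet m) - Ψ ((m : ℝ) * τ) (U m ω)‖ ^ 2 ∂ℙ)
            + ∫ ω, ‖ξ m ω‖ ^ 2 ∂ℙ := by rw [horth m]; ring
      _ ≤ A * (∫ ω, ‖uDet m - U m ω‖ ^ 2 ∂ℙ) + B := by
          apply add_le_add _ (hξbd m)
          rw [← integral_const_mul]
          refine integral_mono hIf (hIe.const_mul A) fun ω => ?_
          have h1 := hLip _ htm (uDet m) (U m ω)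
          have h2 : (0 : ℝ) ≤ 1 + Lψ * τ := by positivity
          simp only [hAdef]
          nlinarith [norm_nonneg (Ψ ((m : ℝ) * τ) (uDet m) - Ψ ((m : ℝ) * τ) (U m ω)),
            norm_nonneg (uDet m - U m ω)]
  -- initial value
  have hE0 : (∫ ω, ‖uDet 0 - U 0 ω‖ ^ 2 ∂ℙ) = 0 := by
    have : ∀ ω, ‖uDet 0 - U 0 ω‖ ^ 2 = (0 : ℝ) := by
      intro ω; rw [hU0 ω, hDet0]; simp
    rw [integral_congr_ae (Filter.Eventually.of_forall this), integral_zero]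
  -- induction bound
  have hEnonneg : ∀ m : ℕ, 0 ≤ ∫ ω, ‖uDet m - U m ω‖ ^ 2 ∂ℙ :=
    fun m => integral_nonneg fun ω => sq_nonneg _
  have hbound : ∀ m : ℕ, m ≤ N →
      (∫ ω, ‖uDet m - U m ω‖ ^ 2 ∂ℙ) ≤ (m : ℝ) * A ^ m * B := by
    intro m
    induction m with
    | zero => intro _; rw [hE0]; simp
    | succ k ih =>
      intro hk
      have hkN : k ≤ N := Nat.le_of_succ_le hk
      have h1 := hrec k (Nat.lt_of_succ_le hk)
      have h2 := ih hkN
      have hAk : (1 : ℝ) ≤ A ^ (k + 1) := one_le_pow₀ hA1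
      have hA0 : (0 : ℝ) ≤ A := le_trans zero_le_one hA1
      have hApow : (0 : ℝ) ≤ A ^ k := pow_nonneg hA0 k
      calc (∫ ω, ‖uDet (k + 1) - U (k + 1) ω‖ ^ 2 ∂ℙ)
          ≤ A * ((k : ℝ) * A ^ k * B) + B := by nlinarith
        _ = (k : ℝ) * A ^ (k + 1) * B + B := by ring
        _ ≤ (k : ℝ) * A ^ (k + 1) * B + A ^ (k + 1) * B := by nlinarith
        _ = ((k : ℝ) + 1) * A ^ (k + 1) * B := by ring
        _ = (((k + 1 : ℕ)) : ℝ) * A ^ (k + 1) * B := by push_cast; ring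
  -- bound A^N and N*B
  have hexp : (1 : ℝ) + Lψ * τ ≤ Real.exp (Lψ * τ) := by
    have := Real.add_one_le_exp (Lψ * τ); linarith
  have hA0 : (0 : ℝ) ≤ 1 + Lψ * τ := by positivity
  have hAN : A ^ N ≤ Real.exp (2 * Lψ * T) := by
    calc A ^ N = ((1 + Lψ * τ) ^ 2) ^ N := rfl
      _ ≤ (Real.exp (Lψ * τ) ^ 2) ^ N := by
          apply pow_le_pow_left₀ (pow_nonneg hA0 2)
          exact pow_le_pow_left₀ hA0 hexp 2
      _ = Real.exp (Lψ * τ) ^ (2 * N) := by rw [← pow_mul]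
      _ = Real.exp ((2 * N : ℕ) * (Lψ * τ)) := by rw [← Real.exp_nat_mul]
      _ ≤ Real.exp (2 * Lψ * T) := by
          apply Real.exp_le_exp.mpr
          push_cast
          calc 2 * (N : ℝ) * (Lψ * τ) = 2 * Lψ * ((N : ℝ) * τ) := by ring
            _ ≤ 2 * Lψ * T := by nlinarith
  have hτ2p : τ ^ (2 * p + 1) = τ ^ (2 * p) * τ := by
    rw [Real.rpow_add hτ, Real.rpow_one]
  -- global bound on the deterministic-random gap
  have hEn : (∫ ω, ‖uDet n - U n ω‖ ^ 2 ∂ℙ) ≤ T * Cξ * Real.exp (2 * Lψ * T) * τ ^ (2 * p) := by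
    have h1 := hbound n hnN
    have hAn : A ^ n ≤ A ^ N := pow_le_pow_right₀ hA1 hnN
    have hnc : (n : ℝ) ≤ (N : ℝ) := by exact_mod_cast hnN
    have hN0 : (0 : ℝ) ≤ (N : ℝ) := Nat.cast_nonneg N
    have hτ2p0 : (0 : ℝ) ≤ τ ^ (2 * p) := Real.rpow_nonneg hτ.le _
    have hAn0 : (0 : ℝ) ≤ A ^ n := pow_nonneg (le_trans zero_le_one hA1) n
    calc (∫ ω, ‖uDet n - U n ω‖ ^ 2 ∂ℙ) ≤ (n : ℝ) * A ^ n * B := h1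
      _ ≤ (N : ℝ) * A ^ N * B := by
          have h1 : (n : ℝ) * A ^ n ≤ (N : ℝ) * A ^ N := mul_le_mul hnc hAn hAn0 hN0
          exact mul_le_mul_of_nonneg_right h1 hBpos.le
      _ = ((N : ℝ) * τ) * (A ^ N * (Cξ * τ ^ (2 * p))) := by
          rw [hBdef, hτ2p]; ring
      _ ≤ T * (Real.exp (2 * Lψ * T) * (Cξ * τ ^ (2 * p))) := by
          have hx : (0 : ℝ) ≤ Cξ * τ ^ (2 * p) := by positivity
          exact mul_le_mul hNT (mul_le_mul_of_nonneg_right hAN hx)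
            (mul_nonneg (pow_nonneg (le_trans zero_le_one hA1) N) hx) hT.le
      _ = T * Cξ * Real.exp (2 * Lψ * T) * τ ^ (2 * p) := by ring
  -- final integral bound
  have hfinal : (∫ ω, ‖u n - U n ω‖ ^ 2 ∂ℙ)
      ≤ 2 * (C * τ ^ q) ^ 2 + K * τ ^ (2 * p) := by
    have hIL := int_norm_sq' ((memLp_const (u n)).sub (hUL2 n))
    have hIe := int_norm_sq' (heL2 n)
    have step1 : (∫ ω, ‖u n - U n ω‖ ^ 2 ∂ℙ)
        ≤ ∫ ω, (2 * ‖u n - uDet n‖ ^ 2 + 2 * ‖uDet n - U n ω‖ ^ 2) ∂ℙ := by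
      refine integral_mono hIL ((integrable_const _).add (hIe.const_mul 2)) fun ω => ?_
      have h1 : u n - U n ω = (u n - uDet n) + (uDet n - U n ω) := by abel
      rw [h1]
      have h2 := norm_add_le (u n - uDet n) (uDet n - U n ω)
      calc ‖(u n - uDet n) + (uDet n - U n ω)‖ ^ 2
          ≤ (‖u n - uDet n‖ + ‖uDet n - U n ω‖) ^ 2 :=
            pow_le_pow_left₀ (norm_nonneg _) h2 2
        _ ≤ 2 * ‖u n - uDet n‖ ^ 2 + 2 * ‖uDet n - U n ω‖ ^ 2 := by
            nlinarith [sq_nonneg (‖u n - uDet n‖ - ‖uDet n - U n ω‖)]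
    have step2 : (∫ ω, (2 * ‖u n - uDet n‖ ^ 2 + 2 * ‖uDet n - U n ω‖ ^ 2) ∂ℙ)
        = 2 * ‖u n - uDet n‖ ^ 2 + 2 * (∫ ω, ‖uDet n - U n ω‖ ^ 2 ∂ℙ) := by
      rw [integral_add (integrable_const _) (hIe.const_mul 2), integral_const,
        integral_const_mul]
      simp
    have h3 : ‖u n - uDet n‖ ^ 2 ≤ (C * τ ^ q) ^ 2 := by
      apply sq_le_sq' _ (hdet n hnN)
      have h0 : (0 : ℝ) ≤ C * τ ^ q := by positivity
      linarith [norm_nonneg (u n - uDet n)]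
    calc (∫ ω, ‖u n - U n ω‖ ^ 2 ∂ℙ)
        ≤ 2 * ‖u n - uDet n‖ ^ 2 + 2 * (∫ ω, ‖uDet n - U n ω‖ ^ 2 ∂ℙ) := by
          rw [← step2]; exact step1
      _ ≤ 2 * (C * τ ^ q) ^ 2 + 2 * (T * Cξ * Real.exp (2 * Lψ * T) * τ ^ (2 * p)) := by
          apply add_le_add (by linarith) (by linarith [hEn])
      _ = 2 * (C * τ ^ q) ^ 2 + K * τ ^ (2 * p) := by rw [hKdef]; ring
  -- take square roots
  have hInt0 : 0 ≤ ∫ ω, ‖u n - U n ω‖ ^ 2 ∂ℙ := integral_nonneg fun ω => sq_nonneg _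
  have hCτq : (0 : ℝ) ≤ C * τ ^ q := by positivity
  rw [← Real.sqrt_eq_rpow]
  have hb1 : (0 : ℝ) ≤ 2 * (C * τ ^ q) ^ 2 := by positivity
  have hb2 : (0 : ℝ) ≤ K * τ ^ (2 * p) := by positivity
  calc Real.sqrt (∫ ω, ‖u n - U n ω‖ ^ 2 ∂ℙ)
      ≤ Real.sqrt (2 * (C * τ ^ q) ^ 2 + K * τ ^ (2 * p)) := Real.sqrt_le_sqrt hfinal
    _ ≤ Real.sqrt (2 * (C * τ ^ q) ^ 2) + Real.sqrt (K * τ ^ (2 * p)) :=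
        sqrt_add_le' _ _ hb1 hb2
    _ = Real.sqrt 2 * (C * τ ^ q) + Real.sqrt K * τ ^ p := by
        rw [Real.sqrt_mul (by norm_num : (0:ℝ) ≤ 2), Real.sqrt_sq hCτq,
          Real.sqrt_mul hKpos.le]
        congr 1
        have h2p : τ ^ (2 * p) = (τ ^ p) ^ 2 := by
          rw [← Real.rpow_natCast (τ ^ p) 2, ← Real.rpow_mul hτ.le]
          norm_num [mul_comm]
        rw [h2p, Real.sqrt_sq (Real.rpow_nonneg hτ.le p)]
    _ ≤ Real.sqrt 2 * C * τ ^ min p q + Real.sqrt K * τ ^ min p q := by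
        apply add_le_add
        · rw [mul_assoc]
          apply mul_le_mul_of_nonneg_left _ (Real.sqrt_nonneg 2)
          apply mul_le_mul_of_nonneg_left _ hC.le
          exact Real.rpow_le_rpow_of_exponent_ge hτ hτ1 (min_le_right p q)
        · apply mul_le_mul_of_nonneg_left _ (Real.sqrt_nonneg K)
          exact Real.rpow_le_rpow_of_exponent_ge hτ hτ1 (min_le_left p q)
    _ = (Real.sqrt 2 * C + Real.sqrt K) * τ ^ min p q := by ring
end

section
/- Let H be a real inner product space, K ⊆ H a linear subspace, and A : H → H a linear map such that ⟨A w, w⟩ ≥ 0 for all w ∈ K. Let L_f ≥ 0 and 0 < τ ≤ τ* < 1/(2 L_f). Suppose w₀, w₁ ∈ K and r ∈ H satisfy ‖r‖ ≤ L_f ‖w₁‖ and the variational identity ⟨w₁ − w₀, z⟩ + τ ⟨A w₁, z⟩ = τ ⟨r, z⟩ for all z ∈ K. Then ‖w₁‖ ≤ (1 − 2 L_f τ)^{−1/2} ‖w₀‖ ≤ (1 + L_Ψ τ) ‖w₀‖, where L_Ψ = 2 L_f / (1 − 2 L_f τ*). -/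
/-- Lipschitz stability of the implicit Euler step on the kernel of the constraint. -/
theorem implicit_euler_lipschitz
    {H : Type*} [NormedAddCommGroup H] [InnerProductSpace ℝ H]
    (K : Submodule ℝ H) (A : H →ₗ[ℝ] H)
    (hA : ∀ w ∈ K, (0 : ℝ) ≤ inner ℝ (A w) w)
    (Lf τ τs : ℝ) (hLf : 0 ≤ Lf) (hτ : 0 < τ) (hττs : τ ≤ τs) (hτs : 2 * Lf * τs < 1)
    (w₀ w₁ r : H) (hw₀ : w₀ ∈ K) (hw₁ : w₁ ∈ K)
    (hr : ‖r‖ ≤ Lf * ‖w₁‖)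
    (hvar : ∀ z ∈ K, (inner ℝ (w₁ - w₀) z : ℝ) + τ * inner ℝ (A w₁) z = τ * inner ℝ r z) :
    ‖w₁‖ ≤ (1 - 2 * Lf * τ) ^ (-(1 : ℝ) / 2) * ‖w₀‖ ∧
    (1 - 2 * Lf * τ) ^ (-(1 : ℝ) / 2) * ‖w₀‖ ≤ (1 + (2 * Lf / (1 - 2 * Lf * τs)) * τ) * ‖w₀‖ := by
  set u : ℝ := 1 - 2 * Lf * τ with hu_def
  set s : ℝ := 1 - 2 * Lf * τs with hs_def
  have hs : 0 < s := by simp only [hs_def]; linarith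
  have hsu : s ≤ u := by
    have : 2 * Lf * τ ≤ 2 * Lf * τs := by nlinarith
    simp only [hu_def, hs_def]; linarith
  have hu0 : 0 < u := lt_of_lt_of_le hs hsu
  have hu1 : u ≤ 1 := by
    have : 0 ≤ 2 * Lf * τ := by positivity
    simp only [hu_def]; linarith
  -- test z = w₁ in the variational identity
  have h1 := hvar w₁ hw₁
  rw [inner_sub_left, real_inner_self_eq_norm_sq] at h1
  have hA1 : (0 : ℝ) ≤ inner ℝ (A w₁) w₁ := hA w₁ hw₁
  have hiw : (inner ℝ w₀ w₁ : ℝ) ≤ ‖w₀‖ * ‖w₁‖ := real_inner_le_norm w₀ w₁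
  have hir : (inner ℝ r w₁ : ℝ) ≤ ‖r‖ * ‖w₁‖ := real_inner_le_norm r w₁
  have hw1n : (0 : ℝ) ≤ ‖w₁‖ := norm_nonneg _
  have hw0n : (0 : ℝ) ≤ ‖w₀‖ := norm_nonneg _
  have key : u * ‖w₁‖ ^ 2 ≤ ‖w₀‖ ^ 2 := by
    have h2 : τ * (inner ℝ r w₁ : ℝ) ≤ τ * (Lf * ‖w₁‖ * ‖w₁‖) := by
      apply mul_le_mul_of_nonneg_left _ hτ.le
      calc (inner ℝ r w₁ : ℝ) ≤ ‖r‖ * ‖w₁‖ := hir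
        _ ≤ Lf * ‖w₁‖ * ‖w₁‖ := by nlinarith
    have h3 : 0 ≤ τ * (inner ℝ (A w₁) w₁ : ℝ) := mul_nonneg hτ.le hA1
    simp only [hu_def]
    nlinarith [sq_nonneg (‖w₀‖ - ‖w₁‖)]
  have hsqrt : Real.sqrt u * ‖w₁‖ ≤ ‖w₀‖ := by
    have h4 : Real.sqrt (u * ‖w₁‖ ^ 2) ≤ Real.sqrt (‖w₀‖ ^ 2) := Real.sqrt_le_sqrt key
    rwa [Real.sqrt_mul hu0.le, Real.sqrt_sq hw1n, Real.sqrt_sq hw0n] at h4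
  have hsq0 : 0 < Real.sqrt u := Real.sqrt_pos.mpr hu0
  have hrpow : u ^ (-(1 : ℝ) / 2) = (Real.sqrt u)⁻¹ := by
    rw [neg_div, Real.rpow_neg hu0.le, Real.sqrt_eq_rpow]
  constructor
  · rw [hrpow, inv_mul_eq_div, le_div_iff₀ hsq0]
    linarith [hsqrt]
  · rw [hrpow]
    apply mul_le_mul_of_nonneg_right _ hw0n
    have husqrt : u ≤ Real.sqrt u := by
      have h5 : Real.sqrt u * Real.sqrt u ≤ 1 * Real.sqrt u :=
        mul_le_mul_of_nonneg_right (Real.sqrt_le_one.mpr hu1) hsq0.le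
      calc u = Real.sqrt u * Real.sqrt u := (Real.mul_self_sqrt hu0.le).symm
        _ ≤ 1 * Real.sqrt u := h5
        _ = Real.sqrt u := one_mul _
    have hinv : (Real.sqrt u)⁻¹ ≤ u⁻¹ := by
      apply inv_anti₀ hu0 husqrt
    have hdiv : 2 * Lf * τ / s * u ≥ 2 * Lf * τ := by
      rw [ge_iff_le, div_mul_eq_mul_div, le_div_iff₀ hs]
      nlinarith
    have h3 : 1 ≤ (1 + 2 * Lf / s * τ) * u := by
      have he : 2 * Lf / s * τ = 2 * Lf * τ / s := by ring
      nlinarith [hdiv]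
    have hc2 : u⁻¹ ≤ 1 + 2 * Lf / s * τ := by
      rw [← one_div, div_le_iff₀ hu0]
      linarith
    linarith
end

section
/- Let H be a real inner product space, K ⊆ H a linear subspace, and A : H → H a linear map such that ⟨A w, w⟩ ≥ 0 for all w ∈ K. Let L_f ≥ 0 and 0 < τ ≤ τ* < 1/L_f. Suppose w₀, w₁ ∈ K and r ∈ H satisfy ‖r‖ ≤ (L_f / 2) ‖w₀ + w₁‖ and the variational identity ⟨w₁ − w₀, z⟩ + (τ/2) ⟨A (w₀ + w₁), z⟩ = τ ⟨r, z⟩ for all z ∈ K. Then ‖w₁‖ ≤ (1 − L_f τ)^{−1/2} (1 + L_f τ)^{1/2} ‖w₀‖ ≤ (1 + L_Ψ τ) ‖w₀‖, where L_Ψ = 2 L_f / (1 − L_f τ*). -/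
lemma aux_sqrt_le_self {x : ℝ} (hx : 1 ≤ x) : Real.sqrt x ≤ x := by
  have hx0 : (0:ℝ) ≤ x := by linarith
  have e := Real.sq_sqrt hx0
  nlinarith [sq_nonneg (Real.sqrt x - 1)]

/-- Lipschitz stability of the midpoint step on the kernel of the constraint. -/
theorem midpoint_lipschitz
    {H : Type*} [NormedAddCommGroup H] [InnerProductSpace ℝ H]
    (K : Submodule ℝ H) (A : H →ₗ[ℝ] H)
    (hA : ∀ w ∈ K, (0 : ℝ) ≤ inner ℝ (A w) w)
    (Lf τ τs : ℝ) (hLf : 0 ≤ Lf) (hτ : 0 < τ) (hττs : τ ≤ τs) (hτs : Lf * τs < 1)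
    (w₀ w₁ r : H) (hw₀ : w₀ ∈ K) (hw₁ : w₁ ∈ K)
    (hr : ‖r‖ ≤ (Lf / 2) * ‖w₀ + w₁‖)
    (hvar : ∀ z ∈ K,
      (inner ℝ (w₁ - w₀) z : ℝ) + (τ / 2) * inner ℝ (A (w₀ + w₁)) z = τ * inner ℝ r z) :
    ‖w₁‖ ≤ (1 - Lf * τ) ^ (-(1 : ℝ) / 2) * (1 + Lf * τ) ^ ((1 : ℝ) / 2) * ‖w₀‖ ∧
    (1 - Lf * τ) ^ (-(1 : ℝ) / 2) * (1 + Lf * τ) ^ ((1 : ℝ) / 2) * ‖w₀‖ ≤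
      (1 + (2 * Lf / (1 - Lf * τs)) * τ) * ‖w₀‖ := by
  set a := Lf * τ with ha_def
  set s := Lf * τs with hs_def
  have ha0 : 0 ≤ a := mul_nonneg hLf hτ.le
  have has : a ≤ s := mul_le_mul_of_nonneg_left hττs hLf
  have ha1 : a < 1 := lt_of_le_of_lt has hτs
  have h1ma : 0 < 1 - a := by linarith
  have h1ms : 0 < 1 - s := by linarith
  have h1pa : (0:ℝ) < 1 + a := by linarith
  -- energy inequality
  have hmem : w₀ + w₁ ∈ K := K.add_mem hw₀ hw₁
  have hE := hvar (w₀ + w₁) hmem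
  have hinner : (inner ℝ (w₁ - w₀) (w₀ + w₁) : ℝ) = ‖w₁‖ ^ 2 - ‖w₀‖ ^ 2 := by
    rw [inner_sub_left, inner_add_right, inner_add_right]
    rw [real_inner_self_eq_norm_sq, real_inner_self_eq_norm_sq, real_inner_comm w₀ w₁]
    ring
  have hApos : (0:ℝ) ≤ inner ℝ (A (w₀ + w₁)) (w₀ + w₁) := hA _ hmem
  have hrin : (inner ℝ r (w₀ + w₁) : ℝ) ≤ (Lf / 2) * ‖w₀ + w₁‖ ^ 2 := by
    calc (inner ℝ r (w₀ + w₁) : ℝ) ≤ ‖r‖ * ‖w₀ + w₁‖ := real_inner_le_norm r _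
    _ ≤ (Lf / 2) * ‖w₀ + w₁‖ * ‖w₀ + w₁‖ :=
        mul_le_mul_of_nonneg_right hr (norm_nonneg _)
    _ = (Lf / 2) * ‖w₀ + w₁‖ ^ 2 := by ring
  have hns : ‖w₀ + w₁‖ ^ 2 ≤ 2 * (‖w₀‖ ^ 2 + ‖w₁‖ ^ 2) := by
    have h : ‖w₀ + w₁‖ ^ 2 ≤ (‖w₀‖ + ‖w₁‖) ^ 2 :=
      pow_le_pow_left₀ (norm_nonneg _) (norm_add_le w₀ w₁) 2
    nlinarith [sq_nonneg (‖w₀‖ - ‖w₁‖)]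
  have hkey : (1 - a) * ‖w₁‖ ^ 2 ≤ (1 + a) * ‖w₀‖ ^ 2 := by
    have : ‖w₁‖ ^ 2 - ‖w₀‖ ^ 2 ≤ τ * ((Lf / 2) * ‖w₀ + w₁‖ ^ 2) := by
      rw [hinner] at hE
      nlinarith [mul_le_mul_of_nonneg_left hrin hτ.le]
    nlinarith [mul_le_mul_of_nonneg_left hns (mul_nonneg (mul_nonneg hτ.le hLf) (by norm_num : (0:ℝ) ≤ 1/2))]
  -- rewrite the rpow coefficient as a sqrt quotient
  have hc : (1 - a) ^ (-(1 : ℝ) / 2) * (1 + a) ^ ((1 : ℝ) / 2)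
      = Real.sqrt (1 + a) / Real.sqrt (1 - a) := by
    rw [neg_div, Real.rpow_neg h1ma.le, ← Real.sqrt_eq_rpow, ← Real.sqrt_eq_rpow]
    ring
  have hsqrt1ma : 0 < Real.sqrt (1 - a) := Real.sqrt_pos.mpr h1ma
  have hsqrt1pa : 0 < Real.sqrt (1 + a) := Real.sqrt_pos.mpr h1pa
  constructor
  · rw [hc]
    rw [div_mul_eq_mul_div, le_div_iff₀ hsqrt1ma]
    have h1 : Real.sqrt (1 - a) * ‖w₁‖ = Real.sqrt ((1 - a) * ‖w₁‖ ^ 2) := by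
      rw [Real.sqrt_mul h1ma.le, Real.sqrt_sq (norm_nonneg _)]
    have h2 : Real.sqrt (1 + a) * ‖w₀‖ = Real.sqrt ((1 + a) * ‖w₀‖ ^ 2) := by
      rw [Real.sqrt_mul h1pa.le, Real.sqrt_sq (norm_nonneg _)]
    rw [mul_comm ‖w₁‖ (Real.sqrt (1 - a)), h1, mul_comm, h2]
    exact Real.sqrt_le_sqrt (by nlinarith [hkey])
  · rw [hc]
    have hq : Real.sqrt (1 + a) / Real.sqrt (1 - a) ≤ 1 + (2 * Lf / (1 - s)) * τ := by
      have hfrac : Real.sqrt (1 + a) / Real.sqrt (1 - a) ≤ (1 + a) / (1 - a) := by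
        rw [← Real.sqrt_div h1pa.le]
        exact aux_sqrt_le_self ((le_div_iff₀ h1ma).mpr (by linarith))
      have h2 : (1 + a) / (1 - a) = 1 + 2 * a / (1 - a) := by
        field_simp
        ring
      have h3 : 2 * a / (1 - a) ≤ 2 * a / (1 - s) :=
        div_le_div_of_nonneg_left (by linarith) h1ms (by linarith)
      have h4 : 2 * a / (1 - s) = (2 * Lf / (1 - s)) * τ := by
        rw [ha_def]; ring
      linarith [hfrac, h2 ▸ hfrac, h3]
    calc Real.sqrt (1 + a) / Real.sqrt (1 - a) * ‖w₀‖
        ≤ (1 + (2 * Lf / (1 - s)) * τ) * ‖w₀‖ :=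
          mul_le_mul_of_nonneg_right hq (norm_nonneg _)
end

section
/- Let A be a real symmetric positive definite n×n matrix, τ > 0, L_f ≥ 0, c, d ∈ ℝⁿ, and let f : ℝⁿ → ℝⁿ satisfy ‖f(x) − f(y)‖ ≤ L_f ‖x − y‖ for all x, y ∈ ℝⁿ. Define the exponential Euler map Ψ_τ(v) = exp(−τA) v + A⁻¹ (I − exp(−τA)) ( f(v + c) − d ). Then for all v₁, v₂ ∈ ℝⁿ, ‖Ψ_τ(v₁) − Ψ_τ(v₂)‖ ≤ (1 + τ L_f) ‖v₁ − v₂‖. -/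
open Matrix

lemma unitary_sum_sq {n : ℕ} (U : Matrix (Fin n) (Fin n) ℝ)
    (hU : U ∈ Matrix.unitaryGroup (Fin n) ℝ) (y : Fin n → ℝ) :
    ∑ i, ((U *ᵥ y) i)^2 = ∑ i, (y i)^2 := by
  have hUtU : Uᵀ * U = 1 := by
    have := Unitary.star_mul_self_of_mem hU
    rwa [Matrix.star_eq_conjTranspose, Matrix.conjTranspose_eq_transpose_of_trivial] at this
  have h1 : ∑ i, ((U *ᵥ y) i)^2 = (U *ᵥ y) ⬝ᵥ (U *ᵥ y) := by
    simp [dotProduct, sq]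
  have h2 : (U *ᵥ y) ⬝ᵥ (U *ᵥ y) = y ⬝ᵥ y := by
    rw [Matrix.dotProduct_mulVec, ← Matrix.mulVec_transpose, Matrix.mulVec_mulVec, hUtU,
      Matrix.one_mulVec]
  rw [h1, h2]
  simp [dotProduct, sq]

lemma conj_diag_norm_le {n : ℕ} (U : Matrix (Fin n) (Fin n) ℝ)
    (hU : U ∈ Matrix.unitaryGroup (Fin n) ℝ) (μ : Fin n → ℝ) (K : ℝ) (hK0 : 0 ≤ K)
    (hK : ∀ i, |μ i| ≤ K) (x : EuclideanSpace ℝ (Fin n)) :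
    ‖Matrix.toEuclideanLin (U * Matrix.diagonal μ * star U) x‖ ≤ K * ‖x‖ := by
  have hUs : star U ∈ Matrix.unitaryGroup (Fin n) ℝ := Unitary.star_mem hU
  set y : Fin n → ℝ := (star U) *ᵥ (WithLp.equiv 2 (Fin n → ℝ) x) with hy
  have hnorm : ∀ (z : EuclideanSpace ℝ (Fin n)), ‖z‖ = Real.sqrt (∑ i, (z i)^2) := by
    intro z
    rw [EuclideanSpace.norm_eq]
    congr 1
    exact Finset.sum_congr rfl fun i _ => by rw [Real.norm_eq_abs, sq_abs]
  have hxy : ∑ i, (y i)^2 = ∑ i, (x i)^2 := unitary_sum_sq _ hUs _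
  have happ : (Matrix.toEuclideanLin (U * Matrix.diagonal μ * star U) x : Fin n → ℝ)
      = U *ᵥ (Matrix.diagonal μ *ᵥ y) := by
    rw [Matrix.toEuclideanLin_apply]
    simp [hy, Matrix.mulVec_mulVec, Matrix.mul_assoc]
  rw [hnorm, hnorm x]
  have : ∑ i, ((Matrix.toEuclideanLin (U * Matrix.diagonal μ * star U) x : Fin n → ℝ) i)^2
      = ∑ i, ((Matrix.diagonal μ *ᵥ y) i)^2 := by
    rw [happ]; exact unitary_sum_sq U hU _
  rw [this]
  have hbound : ∑ i, ((Matrix.diagonal μ *ᵥ y) i)^2 ≤ K^2 * ∑ i, (x i)^2 := by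
    rw [← hxy, Finset.mul_sum]
    apply Finset.sum_le_sum
    intro i _
    rw [Matrix.mulVec_diagonal, mul_pow]
    have : (μ i)^2 ≤ K^2 := by
      have := hK i; nlinarith [abs_nonneg (μ i), sq_abs (μ i)]
    nlinarith [sq_nonneg (y i)]
  calc Real.sqrt (∑ i, ((Matrix.diagonal μ *ᵥ y) i)^2)
      ≤ Real.sqrt (K^2 * ∑ i, (x i)^2) := Real.sqrt_le_sqrt hbound
    _ = K * Real.sqrt (∑ i, (x i)^2) := by
        rw [Real.sqrt_mul (sq_nonneg K), Real.sqrt_sq hK0]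

lemma conj_diag_mul {n : ℕ} (U : Matrix (Fin n) (Fin n) ℝ)
    (hU : U ∈ Matrix.unitaryGroup (Fin n) ℝ) (v w : Fin n → ℝ) :
    (U * Matrix.diagonal v * star U) * (U * Matrix.diagonal w * star U)
      = U * Matrix.diagonal (v * w) * star U := by
  have h : star U * U = 1 := Unitary.star_mul_self_of_mem hU
  calc (U * Matrix.diagonal v * star U) * (U * Matrix.diagonal w * star U)
      = U * (Matrix.diagonal v * ((star U * U) * Matrix.diagonal w)) * star U := by
        simp only [Matrix.mul_assoc]
    _ = U * Matrix.diagonal (v * w) * star U := by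
        rw [h, Matrix.one_mul, Matrix.diagonal_mul_diagonal]; rfl

/-- Lipschitz property of the exponential Euler step (kernel variables, matrix case). -/
theorem exponential_euler_lipschitz (n : ℕ) (A : Matrix (Fin n) (Fin n) ℝ)
    (hsymm : A.IsSymm) (hpd : ∀ x : Fin n → ℝ, x ≠ 0 → 0 < x ⬝ᵥ A.mulVec x)
    (τ : ℝ) (hτ : 0 < τ) (Lf : ℝ) (hLf : 0 ≤ Lf)
    (c d : EuclideanSpace ℝ (Fin n))
    (f : EuclideanSpace ℝ (Fin n) → EuclideanSpace ℝ (Fin n))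
    (hf : ∀ x y, ‖f x - f y‖ ≤ Lf * ‖x - y‖)
    (Ψ : EuclideanSpace ℝ (Fin n) → EuclideanSpace ℝ (Fin n))
    (hΨ : ∀ v, Ψ v = Matrix.toEuclideanLin (NormedSpace.exp (-(τ • A))) v +
      Matrix.toEuclideanLin (A⁻¹ * (1 - NormedSpace.exp (-(τ • A)))) (f (v + c) - d))
    (v₁ v₂ : EuclideanSpace ℝ (Fin n)) :
    ‖Ψ v₁ - Ψ v₂‖ ≤ (1 + τ * Lf) * ‖v₁ - v₂‖ := by
  have hA : A.IsHermitian := by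
    rw [Matrix.IsHermitian, Matrix.conjTranspose_eq_transpose_of_trivial]; exact hsymm
  have hPD : A.PosDef := Matrix.PosDef.of_dotProduct_mulVec_pos hA (fun x hx => by simpa using hpd x hx)
  set U : Matrix (Fin n) (Fin n) ℝ := (hA.eigenvectorUnitary : Matrix (Fin n) (Fin n) ℝ) with hUdef
  have hU : U ∈ Matrix.unitaryGroup (Fin n) ℝ := hA.eigenvectorUnitary.2
  set lam : Fin n → ℝ := hA.eigenvalues with hlam
  have hlampos : ∀ i, 0 < lam i := fun i => hPD.eigenvalues_pos i
  have hspec : A = U * Matrix.diagonal lam * star U := by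
    have := hA.spectral_theorem
    simpa [Function.comp] using this
  have hUunit : IsUnit U := ⟨⟨U, star U, Unitary.mul_star_self_of_mem hU, Unitary.star_mul_self_of_mem hU⟩, rfl⟩
  have hUinv : U⁻¹ = star U := Matrix.inv_eq_left_inv (Unitary.star_mul_self_of_mem hU)
  -- exponential
  have hexp : NormedSpace.exp (-(τ • A))
      = U * Matrix.diagonal (fun i => Real.exp (-(τ * lam i))) * star U := by
    have h1 : -(τ • A) = U * Matrix.diagonal (fun i => -(τ * lam i)) * star U := by
      have hd : Matrix.diagonal (fun i => -(τ * lam i)) = -(τ • Matrix.diagonal lam) := by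
        rw [← Matrix.diagonal_smul, ← Matrix.diagonal_neg]; rfl
      rw [hspec, hd]
      simp [mul_neg, neg_mul, mul_smul_comm, smul_mul_assoc]
    rw [h1, ← hUinv, Matrix.exp_conj U _ hUunit, Matrix.exp_diagonal, hUinv]
    congr 1
    congr 1
    congr 1
    rw [Pi.exp_def]
    funext i
    rw [← Real.exp_eq_exp_ℝ]
  -- inverse
  have hinv : A⁻¹ = U * Matrix.diagonal (fun i => (lam i)⁻¹) * star U := by
    apply Matrix.inv_eq_right_inv
    rw [hspec, conj_diag_mul U hU]
    have : (lam * fun i => (lam i)⁻¹) = fun _ => (1:ℝ) := by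
      funext i; exact mul_inv_cancel₀ (hlampos i).ne'
    rw [this]
    rw [show Matrix.diagonal (fun _ : Fin n => (1:ℝ)) = 1 from Matrix.diagonal_one]
    rw [Matrix.mul_one, Unitary.mul_star_self_of_mem hU]
  -- product matrix
  have hone : (1 : Matrix (Fin n) (Fin n) ℝ)
      = U * Matrix.diagonal (fun _ => (1:ℝ)) * star U := by
    rw [Matrix.diagonal_one, Matrix.mul_one, Unitary.mul_star_self_of_mem hU]
  have hmat : A⁻¹ * (1 - NormedSpace.exp (-(τ • A)))
      = U * Matrix.diagonal (fun i => (lam i)⁻¹ * (1 - Real.exp (-(τ * lam i)))) * star U := by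
    rw [hinv, hexp]
    rw [hone]
    rw [show (U * Matrix.diagonal (fun _ : Fin n => (1:ℝ)) * star U)
        - U * Matrix.diagonal (fun i => Real.exp (-(τ * lam i))) * star U
        = U * Matrix.diagonal (fun i => 1 - Real.exp (-(τ * lam i))) * star U by
      rw [← Matrix.sub_mul, ← Matrix.mul_sub, ← Matrix.diagonal_sub]]
    rw [conj_diag_mul U hU]
    rfl
  -- bounds
  have hb1 : ∀ i, |Real.exp (-(τ * lam i))| ≤ 1 := by
    intro i
    rw [abs_of_pos (Real.exp_pos _)]
    calc Real.exp (-(τ * lam i)) ≤ Real.exp 0 :=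
      Real.exp_le_exp.mpr (by nlinarith [hlampos i])
    _ = 1 := Real.exp_zero
  have hb2 : ∀ i, |(lam i)⁻¹ * (1 - Real.exp (-(τ * lam i)))| ≤ τ := by
    intro i
    have hl := hlampos i
    have he1 : Real.exp (-(τ * lam i)) ≤ 1 := by
      calc Real.exp (-(τ * lam i)) ≤ Real.exp 0 :=
        Real.exp_le_exp.mpr (by nlinarith)
      _ = 1 := Real.exp_zero
    have he2 : 1 - τ * lam i ≤ Real.exp (-(τ * lam i)) := by
      have := Real.add_one_le_exp (-(τ * lam i)); linarith
    rw [abs_of_nonneg (mul_nonneg (inv_nonneg.mpr hl.le) (by linarith))]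
    calc (lam i)⁻¹ * (1 - Real.exp (-(τ * lam i)))
        ≤ (lam i)⁻¹ * (τ * lam i) :=
          mul_le_mul_of_nonneg_left (by linarith) (inv_nonneg.mpr hl.le)
      _ = τ := by field_simp
  -- assembly
  have hdiff : Ψ v₁ - Ψ v₂
      = Matrix.toEuclideanLin (NormedSpace.exp (-(τ • A))) (v₁ - v₂)
        + Matrix.toEuclideanLin (A⁻¹ * (1 - NormedSpace.exp (-(τ • A))))
            (f (v₁ + c) - f (v₂ + c)) := by
    rw [hΨ, hΨ, add_sub_add_comm, ← map_sub, ← map_sub, sub_sub_sub_cancel_right]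
  have h1 : ‖Matrix.toEuclideanLin (NormedSpace.exp (-(τ • A))) (v₁ - v₂)‖
      ≤ 1 * ‖v₁ - v₂‖ := by
    rw [hexp]; exact conj_diag_norm_le U hU _ 1 zero_le_one hb1 _
  have h2 : ‖Matrix.toEuclideanLin (A⁻¹ * (1 - NormedSpace.exp (-(τ • A))))
      (f (v₁ + c) - f (v₂ + c))‖ ≤ τ * (Lf * ‖v₁ - v₂‖) := by
    rw [hmat]
    calc ‖Matrix.toEuclideanLin _ (f (v₁ + c) - f (v₂ + c))‖
        ≤ τ * ‖f (v₁ + c) - f (v₂ + c)‖ :=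
          conj_diag_norm_le U hU _ τ hτ.le hb2 _
      _ ≤ τ * (Lf * ‖v₁ - v₂‖) := by
          have := hf (v₁ + c) (v₂ + c)
          rw [add_sub_add_right_eq_sub] at this
          exact mul_le_mul_of_nonneg_left this hτ.le
  calc ‖Ψ v₁ - Ψ v₂‖ ≤ ‖Matrix.toEuclideanLin (NormedSpace.exp (-(τ • A))) (v₁ - v₂)‖
        + ‖Matrix.toEuclideanLin (A⁻¹ * (1 - NormedSpace.exp (-(τ • A))))
            (f (v₁ + c) - f (v₂ + c))‖ := by rw [hdiff]; exact norm_add_le _ _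
    _ ≤ 1 * ‖v₁ - v₂‖ + τ * (Lf * ‖v₁ - v₂‖) := add_le_add h1 h2
    _ = (1 + τ * Lf) * ‖v₁ - v₂‖ := by ring
end

section
/- Let A be a real symmetric positive definite n×n matrix, τ* > 0, L_f ≥ 0, c, c', d, d' ∈ ℝⁿ, and let f, f₊ : ℝⁿ → ℝⁿ each satisfy a Lipschitz condition with constant L_f. For τ ∈ (0, τ*], define Ψ_Eul(v) = exp(−τA) v + A⁻¹ (I − exp(−τA)) ( f(v + c) − d ) and the second-order exponential integrator map Ψ_τ(v) = Ψ_Eul(v) + (1/τ) A⁻² (exp(−τA) − I + τA) [ f₊(Ψ_Eul(v) + c') − d' − f(v + c) + d ]. Then there exists a constant L̃ > 0, depending only on L_f and τ* (for instance L̃ = 2 L_f + (τ*/2) L_f²), such that for all τ ∈ (0, τ*] and all v₁, v₂ ∈ ℝⁿ, ‖Ψ_τ(v₁) − Ψ_τ(v₂)‖ ≤ (1 + τ L̃) ‖v₁ − v₂‖. -/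
open Matrix

namespace ExpIntAux

/-- Quadratic upper bound for `exp (-x)` on `x ≥ 0`. -/
lemma exp_neg_le_quad {x : ℝ} (hx : 0 ≤ x) :
    Real.exp (-x) - 1 + x ≤ x ^ 2 / 2 := by
  have hd : ∀ t : ℝ, HasDerivAt (fun t : ℝ => t ^ 2 / 2 - (Real.exp (-t) - 1 + t))
      (t - 1 + Real.exp (-t)) t := by
    intro t
    have h1 : HasDerivAt (fun t : ℝ => t ^ 2 / 2) t t := by
      simpa using (hasDerivAt_pow 2 t).div_const 2
    have h2 : HasDerivAt (fun t : ℝ => Real.exp (-t)) (-Real.exp (-t)) t := by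
      simpa using (hasDerivAt_neg t).exp
    have := h1.sub ((h2.sub_const 1).add (hasDerivAt_id' t))
    exact this.congr_deriv (by ring)
  have hmono : MonotoneOn (fun t : ℝ => t ^ 2 / 2 - (Real.exp (-t) - 1 + t)) (Set.Ici 0) := by
    apply monotoneOn_of_deriv_nonneg (convex_Ici 0)
    · exact fun t _ => ((hd t).differentiableAt).continuousAt.continuousWithinAt
    · intro t _
      exact ((hd t).differentiableAt).differentiableWithinAt
    · intro t ht
      rw [(hd t).deriv]
      have := Real.add_one_le_exp (-t)
      linarith
  have h0 : (0 : ℝ) ∈ Set.Ici (0 : ℝ) := Set.mem_Ici.mpr le_rfl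
  have := hmono h0 (Set.mem_Ici.mpr hx) hx
  simp at this
  linarith

lemma toEuclideanLin_mul_apply {n : ℕ} (M N : Matrix (Fin n) (Fin n) ℝ)
    (v : EuclideanSpace ℝ (Fin n)) :
    Matrix.toEuclideanLin (M * N) v = Matrix.toEuclideanLin M (Matrix.toEuclideanLin N v) := by
  simp [Matrix.toEuclideanLin_apply, Matrix.mulVec_mulVec]

lemma norm_toEuclideanLin_unitary {n : ℕ} {W : Matrix (Fin n) (Fin n) ℝ}
    (hW : W ∈ Matrix.unitaryGroup (Fin n) ℝ) (v : EuclideanSpace ℝ (Fin n)) :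
    ‖Matrix.toEuclideanLin W v‖ = ‖v‖ := by
  have h1 : star W * W = 1 := Matrix.mem_unitaryGroup_iff'.mp hW
  have key : @inner ℝ _ _ (Matrix.toEuclideanLin W v) (Matrix.toEuclideanLin W v) = @inner ℝ _ _ v v := by
    rw [← LinearMap.adjoint_inner_right, ← Matrix.toEuclideanLin_conjTranspose_eq_adjoint,
      ← toEuclideanLin_mul_apply]
    rw [show Wᴴ * W = 1 from h1]
    simp [Matrix.toEuclideanLin_apply]
  rw [← Real.sqrt_sq (norm_nonneg (Matrix.toEuclideanLin W v)),
    ← Real.sqrt_sq (norm_nonneg v)]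
  rw [← real_inner_self_eq_norm_sq, ← real_inner_self_eq_norm_sq, key]

lemma norm_toEuclideanLin_diagonal_le {n : ℕ} (w : Fin n → ℝ) {C : ℝ} (hC : 0 ≤ C)
    (hw : ∀ i, |w i| ≤ C) (v : EuclideanSpace ℝ (Fin n)) :
    ‖Matrix.toEuclideanLin (Matrix.diagonal w) v‖ ≤ C * ‖v‖ := by
  rw [EuclideanSpace.norm_eq, EuclideanSpace.norm_eq]
  have happ : ∀ i, (Matrix.toEuclideanLin (Matrix.diagonal w) v) i = w i * v i := by
    intro i
    simp [Matrix.toEuclideanLin_apply, Matrix.mulVec_diagonal]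
  have hsum : ∑ i, ‖(Matrix.toEuclideanLin (Matrix.diagonal w) v) i‖ ^ 2
      ≤ ∑ i, C ^ 2 * ‖v i‖ ^ 2 := by
    apply Finset.sum_le_sum
    intro i _
    rw [happ i]
    have h1 : ‖w i * v i‖ = |w i| * ‖v i‖ := by
      simp [abs_mul, Real.norm_eq_abs]
    rw [h1, mul_pow]
    have := hw i
    have h2 : |w i| ^ 2 ≤ C ^ 2 := by
      apply sq_le_sq' <;> [linarith [abs_nonneg (w i)]; exact this]
    nlinarith [sq_nonneg (‖v i‖), abs_nonneg (w i)]
  calc Real.sqrt (∑ i, ‖(Matrix.toEuclideanLin (Matrix.diagonal w) v) i‖ ^ 2)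
      ≤ Real.sqrt (∑ i, C ^ 2 * ‖v i‖ ^ 2) := Real.sqrt_le_sqrt hsum
    _ = C * Real.sqrt (∑ i, ‖v i‖ ^ 2) := by
        rw [← Finset.mul_sum, Real.sqrt_mul (sq_nonneg C), Real.sqrt_sq hC]

lemma norm_conj_le {n : ℕ} {W : Matrix (Fin n) (Fin n) ℝ}
    (hW : W ∈ Matrix.unitaryGroup (Fin n) ℝ) (w : Fin n → ℝ) {C : ℝ} (hC : 0 ≤ C)
    (hw : ∀ i, |w i| ≤ C) (v : EuclideanSpace ℝ (Fin n)) :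
    ‖Matrix.toEuclideanLin (W * Matrix.diagonal w * star W) v‖ ≤ C * ‖v‖ := by
  rw [toEuclideanLin_mul_apply, toEuclideanLin_mul_apply, norm_toEuclideanLin_unitary hW]
  calc ‖Matrix.toEuclideanLin (Matrix.diagonal w) (Matrix.toEuclideanLin (star W) v)‖
      ≤ C * ‖Matrix.toEuclideanLin (star W) v‖ := norm_toEuclideanLin_diagonal_le w hC hw _
    _ = C * ‖v‖ := by rw [norm_toEuclideanLin_unitary (Unitary.star_mem hW) v]

variable {n : ℕ} {W : Matrix (Fin n) (Fin n) ℝ}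

lemma conj_mul (hW : W ∈ Matrix.unitaryGroup (Fin n) ℝ) (g h : Fin n → ℝ) :
    (W * Matrix.diagonal g * star W) * (W * Matrix.diagonal h * star W)
      = W * Matrix.diagonal (fun i => g i * h i) * star W := by
  have h1 : star W * W = 1 := Matrix.mem_unitaryGroup_iff'.mp hW
  have key : star W * (W * (Matrix.diagonal h * star W)) = Matrix.diagonal h * star W := by
    rw [← Matrix.mul_assoc, h1, Matrix.one_mul]
  simp only [Matrix.mul_assoc, key]
  rw [← Matrix.mul_assoc (Matrix.diagonal g), Matrix.diagonal_mul_diagonal]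

lemma conj_one (hW : W ∈ Matrix.unitaryGroup (Fin n) ℝ) :
    W * Matrix.diagonal (fun _ => (1:ℝ)) * star W = 1 := by
  have : Matrix.diagonal (fun _ : Fin n => (1:ℝ)) = 1 := Matrix.diagonal_one
  rw [this, Matrix.mul_one, Matrix.mem_unitaryGroup_iff.mp hW]

lemma conj_sub (g h : Fin n → ℝ) :
    (W * Matrix.diagonal g * star W) - (W * Matrix.diagonal h * star W)
      = W * Matrix.diagonal (fun i => g i - h i) * star W := by
  have : Matrix.diagonal (fun i => g i - h i) = Matrix.diagonal g - Matrix.diagonal h := by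
    rw [Matrix.diagonal_sub]
  rw [this, Matrix.mul_sub, Matrix.sub_mul]

lemma conj_add (g h : Fin n → ℝ) :
    (W * Matrix.diagonal g * star W) + (W * Matrix.diagonal h * star W)
      = W * Matrix.diagonal (fun i => g i + h i) * star W := by
  have : Matrix.diagonal (fun i => g i + h i) = Matrix.diagonal g + Matrix.diagonal h := by
    rw [Matrix.diagonal_add]
  rw [this, Matrix.mul_add, Matrix.add_mul]

lemma conj_smul (r : ℝ) (g : Fin n → ℝ) :
    r • (W * Matrix.diagonal g * star W) = W * Matrix.diagonal (fun i => r * g i) * star W := by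
  have : Matrix.diagonal (fun i => r * g i) = r • Matrix.diagonal g := by
    rw [← Matrix.diagonal_smul]
    rfl
  rw [this, Matrix.mul_smul, Matrix.smul_mul]


end ExpIntAux


open ExpIntAux in
/-- Lipschitz property of the second-order exponential integrator
(kernel variables, matrix case): there is a constant `L̃ > 0` depending only on the
Lipschitz constant `L_f` and the maximal step size `τ*`. -/
theorem exponential_second_order_lipschitz (Lf τs : ℝ) (hLf : 0 ≤ Lf) (hτs : 0 < τs) :
    ∃ Lt > (0 : ℝ), ∀ (n : ℕ) (A : Matrix (Fin n) (Fin n) ℝ),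
      A.IsSymm → (∀ x : Fin n → ℝ, x ≠ 0 → 0 < x ⬝ᵥ A.mulVec x) →
      ∀ (c c' d d' : EuclideanSpace ℝ (Fin n))
        (f fp : EuclideanSpace ℝ (Fin n) → EuclideanSpace ℝ (Fin n)),
        (∀ x y, ‖f x - f y‖ ≤ Lf * ‖x - y‖) →
        (∀ x y, ‖fp x - fp y‖ ≤ Lf * ‖x - y‖) →
        ∀ (τ : ℝ), 0 < τ → τ ≤ τs →
        ∀ (ΨEul Ψ : EuclideanSpace ℝ (Fin n) → EuclideanSpace ℝ (Fin n)),
          (∀ v, ΨEul v = Matrix.toEuclideanLin (NormedSpace.exp (-(τ • A))) v +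
            Matrix.toEuclideanLin (A⁻¹ * (1 - NormedSpace.exp (-(τ • A))))
              (f (v + c) - d)) →
          (∀ v, Ψ v = ΨEul v + (1 / τ) •
            Matrix.toEuclideanLin
              (A⁻¹ * A⁻¹ * (NormedSpace.exp (-(τ • A)) - 1 + τ • A))
              (fp (ΨEul v + c') - d' - f (v + c) + d)) →
          ∀ v₁ v₂ : EuclideanSpace ℝ (Fin n),
            ‖Ψ v₁ - Ψ v₂‖ ≤ (1 + τ * Lt) * ‖v₁ - v₂‖ := by
  refine ⟨2 * Lf + τs * Lf ^ 2 / 2 + 1, by positivity, ?_⟩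
  intro n A hsym hpos c c' d d' f fp hf hfp τ hτ hττs ΨEul Ψ hEul hPsi v₁ v₂
  -- Spectral setup
  have hH : A.IsHermitian := by
    rw [Matrix.IsHermitian, Matrix.conjTranspose_eq_transpose_of_trivial]
    exact hsym
  have hPD : A.PosDef := Matrix.PosDef.of_dotProduct_mulVec_pos hH (fun x hx => by simpa using hpos x hx)
  set U : Matrix (Fin n) (Fin n) ℝ := (hH.eigenvectorUnitary : Matrix (Fin n) (Fin n) ℝ) with hUdef
  have hU : U ∈ Matrix.unitaryGroup (Fin n) ℝ := (hH.eigenvectorUnitary).2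
  set μ : Fin n → ℝ := hH.eigenvalues with hμdef
  have hμ : ∀ i, 0 < μ i := fun i => hPD.eigenvalues_pos i
  have hspec : A = U * Matrix.diagonal μ * star U := by
    have := hH.spectral_theorem
    simpa using this
  have hUinv : U⁻¹ = star U := Matrix.inv_eq_left_inv (Matrix.mem_unitaryGroup_iff'.mp hU)
  have hUisunit : IsUnit U := ⟨⟨U, star U, Matrix.mem_unitaryGroup_iff.mp hU, Matrix.mem_unitaryGroup_iff'.mp hU⟩, rfl⟩
  -- the three matrices as conjugated diagonals
  have hτA : τ • A = U * Matrix.diagonal (fun i => τ * μ i) * star U := by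
    rw [hspec, conj_smul]
  have hnegτA : -(τ • A) = U * Matrix.diagonal (fun i => 0 - τ * μ i) * star U := by
    rw [hτA, ← conj_sub]
    simp [Matrix.diagonal_zero]
  have hexp : NormedSpace.exp (-(τ • A))
      = U * Matrix.diagonal (fun i => Real.exp (-(τ * μ i))) * star U := by
    rw [hnegτA, ← hUinv, Matrix.exp_conj _ _ hUisunit, Matrix.exp_diagonal, hUinv]
    have : NormedSpace.exp (fun i => 0 - τ * μ i) = fun i => Real.exp (-(τ * μ i)) := by
      funext i
      rw [Pi.coe_exp, ← Real.exp_eq_exp_ℝ]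
      norm_num
    rw [this]
  have hAinv : A⁻¹ = U * Matrix.diagonal (fun i => (μ i)⁻¹) * star U := by
    apply Matrix.inv_eq_right_inv
    rw [hspec, conj_mul hU]
    have : (fun i => μ i * (μ i)⁻¹) = fun _ : Fin n => (1:ℝ) := by
      funext i; exact mul_inv_cancel₀ (hμ i).ne'
    rw [this, conj_one hU]
  have hone : (1 : Matrix (Fin n) (Fin n) ℝ)
      = U * Matrix.diagonal (fun _ => (1:ℝ)) * star U := (conj_one hU).symm
  have hM2 : A⁻¹ * (1 - NormedSpace.exp (-(τ • A)))
      = U * Matrix.diagonal (fun i => (μ i)⁻¹ * (1 - Real.exp (-(τ * μ i)))) * star U := by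
    rw [hAinv, hexp, hone, conj_sub, conj_mul hU]
  have hM3 : A⁻¹ * A⁻¹ * (NormedSpace.exp (-(τ • A)) - 1 + τ • A)
      = U * Matrix.diagonal
          (fun i => (μ i)⁻¹ * (μ i)⁻¹ * (Real.exp (-(τ * μ i)) - 1 + τ * μ i)) * star U := by
    rw [hAinv, hexp, hone, hτA, conj_mul hU, conj_sub, conj_add, conj_mul hU]
  -- scalar bounds
  have hexp_le_one : ∀ i, Real.exp (-(τ * μ i)) ≤ 1 := by
    intro i
    calc Real.exp (-(τ * μ i)) ≤ Real.exp 0 := by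
          apply Real.exp_le_exp.mpr
          nlinarith [hμ i]
      _ = 1 := Real.exp_zero
  have hlin : ∀ i, 1 - τ * μ i ≤ Real.exp (-(τ * μ i)) := by
    intro i
    have := Real.add_one_le_exp (-(τ * μ i))
    linarith
  -- operator bounds
  have hbE : ∀ x : EuclideanSpace ℝ (Fin n),
      ‖Matrix.toEuclideanLin (NormedSpace.exp (-(τ • A))) x‖ ≤ 1 * ‖x‖ := by
    intro x
    rw [hexp]
    refine norm_conj_le hU _ zero_le_one (fun i => ?_) x
    rw [abs_of_pos (Real.exp_pos _)]
    exact hexp_le_one i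
  have hbM2 : ∀ x : EuclideanSpace ℝ (Fin n),
      ‖Matrix.toEuclideanLin (A⁻¹ * (1 - NormedSpace.exp (-(τ • A)))) x‖ ≤ τ * ‖x‖ := by
    intro x
    rw [hM2]
    refine norm_conj_le hU _ hτ.le (fun i => ?_) x
    have hinv : 0 < (μ i)⁻¹ := inv_pos.mpr (hμ i)
    rw [abs_of_nonneg (mul_nonneg hinv.le (by linarith [hexp_le_one i]))]
    calc (μ i)⁻¹ * (1 - Real.exp (-(τ * μ i))) ≤ (μ i)⁻¹ * (τ * μ i) := by
          apply mul_le_mul_of_nonneg_left _ hinv.le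
          linarith [hlin i]
      _ = τ := by
          rw [mul_comm τ (μ i), ← mul_assoc, inv_mul_cancel₀ (hμ i).ne', one_mul]
  have hbM3 : ∀ x : EuclideanSpace ℝ (Fin n),
      ‖Matrix.toEuclideanLin (A⁻¹ * A⁻¹ *
        (NormedSpace.exp (-(τ • A)) - 1 + τ • A)) x‖ ≤ (τ ^ 2 / 2) * ‖x‖ := by
    intro x
    rw [hM3]
    refine norm_conj_le hU _ (by positivity) (fun i => ?_) x
    have hinv : 0 < (μ i)⁻¹ := inv_pos.mpr (hμ i)
    have hquad := exp_neg_le_quad (x := τ * μ i) (mul_nonneg hτ.le (hμ i).le)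
    rw [abs_of_nonneg (by nlinarith [hlin i])]
    calc (μ i)⁻¹ * (μ i)⁻¹ * (Real.exp (-(τ * μ i)) - 1 + τ * μ i)
        ≤ (μ i)⁻¹ * (μ i)⁻¹ * ((τ * μ i) ^ 2 / 2) := by
          exact mul_le_mul_of_nonneg_left hquad (mul_nonneg hinv.le hinv.le)
      _ = τ ^ 2 / 2 := by
          have hne : μ i ≠ 0 := (hμ i).ne'
          field_simp
  -- Lipschitz estimates
  set Δ := v₁ - v₂ with hΔdef
  have hδf : ‖f (v₁ + c) - f (v₂ + c)‖ ≤ Lf * ‖Δ‖ := by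
    have := hf (v₁ + c) (v₂ + c)
    simpa [add_sub_add_right_eq_sub] using this
  have hEuldiff : ΨEul v₁ - ΨEul v₂
      = Matrix.toEuclideanLin (NormedSpace.exp (-(τ • A))) Δ
        + Matrix.toEuclideanLin (A⁻¹ * (1 - NormedSpace.exp (-(τ • A))))
            (f (v₁ + c) - f (v₂ + c)) := by
    rw [hEul v₁, hEul v₂, add_sub_add_comm, ← map_sub, ← map_sub, sub_sub_sub_cancel_right]
  have hEulLip : ‖ΨEul v₁ - ΨEul v₂‖ ≤ (1 + τ * Lf) * ‖Δ‖ := by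
    rw [hEuldiff]
    refine (norm_add_le _ _).trans ?_
    have e1 := hbE Δ
    have e2 := hbM2 (f (v₁ + c) - f (v₂ + c))
    have e3 : τ * ‖f (v₁ + c) - f (v₂ + c)‖ ≤ τ * (Lf * ‖Δ‖) :=
      mul_le_mul_of_nonneg_left hδf hτ.le
    nlinarith [norm_nonneg Δ]
  have hδfp : ‖fp (ΨEul v₁ + c') - fp (ΨEul v₂ + c')‖ ≤ Lf * ((1 + τ * Lf) * ‖Δ‖) := by
    have h1 := hfp (ΨEul v₁ + c') (ΨEul v₂ + c')
    have h2 : ‖ΨEul v₁ + c' - (ΨEul v₂ + c')‖ = ‖ΨEul v₁ - ΨEul v₂‖ := by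
      rw [add_sub_add_right_eq_sub]
    calc ‖fp (ΨEul v₁ + c') - fp (ΨEul v₂ + c')‖
        ≤ Lf * ‖ΨEul v₁ - ΨEul v₂‖ := by rw [← h2]; exact h1
      _ ≤ Lf * ((1 + τ * Lf) * ‖Δ‖) := mul_le_mul_of_nonneg_left hEulLip hLf
  -- difference of Ψ
  set q := (fp (ΨEul v₁ + c') - d' - f (v₁ + c) + d)
      - (fp (ΨEul v₂ + c') - d' - f (v₂ + c) + d) with hqdef
  have hΨdiff : Ψ v₁ - Ψ v₂ = (ΨEul v₁ - ΨEul v₂)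
      + (1 / τ) • Matrix.toEuclideanLin
          (A⁻¹ * A⁻¹ * (NormedSpace.exp (-(τ • A)) - 1 + τ • A)) q := by
    rw [hPsi v₁, hPsi v₂, add_sub_add_comm, ← smul_sub, ← map_sub]
  have hq : ‖q‖ ≤ (Lf * ((1 + τ * Lf) * ‖Δ‖)) + Lf * ‖Δ‖ := by
    have hqeq : q = (fp (ΨEul v₁ + c') - fp (ΨEul v₂ + c'))
        - (f (v₁ + c) - f (v₂ + c)) := by
      rw [hqdef]; abel
    rw [hqeq]
    exact (norm_sub_le _ _).trans (add_le_add hδfp hδf)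
  have hsm : ‖(1 / τ) • Matrix.toEuclideanLin
      (A⁻¹ * A⁻¹ * (NormedSpace.exp (-(τ • A)) - 1 + τ • A)) q‖
        ≤ (τ / 2) * ‖q‖ := by
    rw [norm_smul, Real.norm_eq_abs, abs_of_pos (by positivity : (0:ℝ) < 1 / τ)]
    calc (1 / τ) * ‖Matrix.toEuclideanLin
          (A⁻¹ * A⁻¹ * (NormedSpace.exp (-(τ • A)) - 1 + τ • A)) q‖
        ≤ (1 / τ) * ((τ ^ 2 / 2) * ‖q‖) :=
          mul_le_mul_of_nonneg_left (hbM3 q) (by positivity)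
      _ = (τ / 2) * ‖q‖ := by field_simp
  rw [hΨdiff]
  refine (norm_add_le _ _).trans ?_
  have hfinal : (τ / 2) * ‖q‖ ≤ (τ / 2) * ((Lf * ((1 + τ * Lf) * ‖Δ‖)) + Lf * ‖Δ‖) :=
    mul_le_mul_of_nonneg_left hq (by positivity)
  have hD : (0:ℝ) ≤ ‖Δ‖ := norm_nonneg Δ
  have hcoef : 1 + τ * Lf + (τ / 2) * ((Lf * ((1 + τ * Lf))) + Lf)
      ≤ 1 + τ * (2 * Lf + τs * Lf ^ 2 / 2 + 1) := by
    nlinarith [mul_le_mul_of_nonneg_right hττs (mul_nonneg hτ.le (sq_nonneg Lf)), hτ.le,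
      sq_nonneg Lf, mul_nonneg hτ.le hLf]
  calc ‖ΨEul v₁ - ΨEul v₂‖ + ‖(1 / τ) • Matrix.toEuclideanLin
        (A⁻¹ * A⁻¹ * (NormedSpace.exp (-(τ • A)) - 1 + τ • A)) q‖
      ≤ (1 + τ * Lf) * ‖Δ‖ + (τ / 2) * ((Lf * ((1 + τ * Lf) * ‖Δ‖)) + Lf * ‖Δ‖) :=
        add_le_add hEulLip (hsm.trans hfinal)
    _ = (1 + τ * Lf + (τ / 2) * ((Lf * ((1 + τ * Lf))) + Lf)) * ‖Δ‖ := by ring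
    _ ≤ (1 + τ * (2 * Lf + τs * Lf ^ 2 / 2 + 1)) * ‖Δ‖ :=
        mul_le_mul_of_nonneg_right hcoef hD
end
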